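/- Let 𝕋 be a Galton–Watson tree with offspring distribution μ, and labels generated as follows: Ũ(∅) = 0 and, conditionally on 𝕋, the increments Ũ(e₊) − Ũ(e₋) along edges are i.i.d. uniform on {−1, 0, 1}; then modified labels U are defined by U(v) = Ũ(v) for v ∉ ∂𝕋 and U(e₊) = Ũ(e₋) − 1 when e₊ ∈ ∂𝕋. For any fixed plane tree τ with n ≥ 1 edges and any admissible labeling U' on τ belonging to 𝒲°_n, the probability ℙ((𝕋, U) = (τ, U')) equals (1/z_β)^{n+1} · (β/3)^n, where β = (√3−1)/2 and z_β = (√3+1)/3. In particular this probability does not depend on (τ, U'), so the conditional law of (𝕋, U) given |𝕋| = n is uniform on 𝒲°_n. -/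

import Mathlib

/-- A plane tree: a finite set of finite sequences of positive integers (here modelled as
lists of naturals with entries `≥ 1`), containing the root `[]`, closed under taking parents
(dropping the last coordinate), and such that the children of `u` present in the tree
are exactly `u ++ [j]` for `1 ≤ j ≤ k_u`. -/
structure PlaneTree where
  verts : Finset (List ℕ)
  root_mem : ([] : List ℕ) ∈ verts
  parent_mem : ∀ v ∈ verts, v ≠ ([] : List ℕ) → v.dropLast ∈ verts
  children : ∀ u ∈ verts, ∃ k : ℕ, ∀ j : ℕ, (u ++ [j]) ∈ verts ↔ 1 ≤ j ∧ j ≤ k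

/-- The number of children `k_u(τ)` of a vertex `u` in the plane tree `τ`. -/
def PlaneTree.numChildren (τ : PlaneTree) (u : List ℕ) : ℕ :=
  (τ.verts.filter (fun v => v ≠ [] ∧ v.dropLast = u)).card

/-- The set of edges of `τ`: pairs `(π(v), v)` for `v ∈ τ \ {∅}`. -/
def PlaneTree.edges (τ : PlaneTree) : Finset (List ℕ × List ℕ) :=
  (τ.verts.erase []).image (fun v => (v.dropLast, v))

/-- The set `∂τ` of leaves of `τ` different from the root. -/
def PlaneTree.leaves (τ : PlaneTree) : Finset (List ℕ) :=
  τ.verts.filter (fun v => v ≠ [] ∧ τ.numChildren v = 0)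

lemma sum_numChildren (τ : PlaneTree) :
    ∑ u ∈ τ.verts, τ.numChildren u = (τ.verts.erase []).card := by
  have h := Finset.card_eq_sum_card_fiberwise (s := τ.verts.erase []) (t := τ.verts)
    (f := fun v => v.dropLast)
    (fun v hv => τ.parent_mem v (Finset.mem_of_mem_erase hv) (Finset.ne_of_mem_erase hv))
  rw [h]
  apply Finset.sum_congr rfl
  intro u _
  unfold PlaneTree.numChildren
  congr 1
  ext v
  simp only [Finset.mem_filter, Finset.mem_erase]
  tauto

lemma root_has_child (τ : PlaneTree) (h2 : 2 ≤ τ.verts.card) :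
    1 ≤ τ.numChildren ([] : List ℕ) := by
  obtain ⟨v, hv, hvne⟩ := Finset.exists_mem_ne (s := τ.verts) (by omega) ([] : List ℕ)
  -- find a vertex of length 1
  have key : ∀ m : ℕ, ∀ w ∈ τ.verts, w ≠ ([] : List ℕ) → w.length ≤ m →
      ∃ u ∈ τ.verts, u ≠ ([] : List ℕ) ∧ u.dropLast = [] := by
    intro m
    induction m with
    | zero => intro w hw hne hl; exact absurd (List.length_eq_zero_iff.mp (Nat.le_zero.mp hl)) hne
    | succ m ih =>
      intro w hw hne hl
      by_cases hd : w.dropLast = []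
      · exact ⟨w, hw, hne, hd⟩
      · refine ih w.dropLast (τ.parent_mem w hw hne) hd ?_
        have := List.length_dropLast (xs := w)
        have : w.length ≥ 1 := List.length_pos_iff.mpr hne
        simp [List.length_dropLast]; omega
  obtain ⟨u, hu, hune, hud⟩ := key v.length v hv hvne le_rfl
  unfold PlaneTree.numChildren
  have : u ∈ τ.verts.filter (fun v => v ≠ [] ∧ v.dropLast = []) := by
    simp [Finset.mem_filter, hu, hune, hud]
  exact Finset.card_pos.mpr ⟨u, this⟩

/-- Lemma 4.1 (quantitative form). Let `(τ, U')` be a labeled tree of `𝒲°_n` with `n ≥ 1`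
edges: `U'(∅) = 0`, increments along edges in `{−1,0,1}`, and `U'(e₊) = U'(e₋) − 1` for every
edge whose endpoint is a leaf `≠` root. The probability that the Galton–Watson tree `𝕋` with
offspring distribution `μ` together with the modified uniform labels `U` equals `(τ, U')` is
`GW(τ) · (1/3)^{n − #∂τ}` (the labels of the `n − #∂τ` edges not ending at a leaf are uniform
on `{−1,0,1}`, the others are determined), and this equals `(1/z_β)^{n+1} (β/3)^n`, a quantity
not depending on `(τ, U')`; hence the conditional law of `(𝕋, U)` given `|𝕋| = n` is uniform
on `𝒲°_n`. -/
theorem stmt_7 (τ : PlaneTree) (n : ℕ) (hn : n = τ.verts.card - 1) (hn1 : 1 ≤ n)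
    (U' : List ℕ → ℤ) (hU0 : U' [] = 0)
    (hinc : ∀ v ∈ τ.verts, v ≠ [] → |U' v - U' v.dropLast| ≤ 1)
    (hleaf : ∀ v ∈ τ.leaves, U' v = U' v.dropLast - 1)
    (β zβ : ℝ) (hβ : β = (Real.sqrt 3 - 1) / 2) (hz : zβ = (Real.sqrt 3 + 1) / 3)
    (μ : ℕ → ℝ) (hμ0 : μ 0 = 1 / (3 * zβ)) (hμ : ∀ k : ℕ, 1 ≤ k → μ k = β ^ k / zβ) :
    (∏ v ∈ τ.verts, μ (τ.numChildren v)) * (1 / 3) ^ (n - τ.leaves.card)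
      = (1 / zβ) ^ (n + 1) * (β / 3) ^ n := by
  have hcard1 : 1 ≤ τ.verts.card := Finset.card_pos.mpr ⟨[], τ.root_mem⟩
  have hcard : τ.verts.card = n + 1 := by omega
  have hsum : ∑ u ∈ τ.verts, τ.numChildren u = n := by
    rw [sum_numChildren, Finset.card_erase_of_mem τ.root_mem, hcard]
    omega
  set p : List ℕ → Prop := fun v => v ≠ [] ∧ τ.numChildren v = 0 with hp
  have hleaves : τ.leaves = τ.verts.filter p := rfl
  set L := τ.leaves.card with hLdef
  have hLsub : τ.leaves ⊆ τ.verts.erase [] := by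
    intro v hv
    simp only [PlaneTree.leaves, Finset.mem_filter] at hv
    exact Finset.mem_erase.mpr ⟨hv.2.1, hv.1⟩
  have hLn : L ≤ n := by
    have := Finset.card_le_card hLsub
    rw [Finset.card_erase_of_mem τ.root_mem, hcard] at this
    simpa using this
  -- split product
  have hsplit : (∏ v ∈ τ.verts, μ (τ.numChildren v))
      = (∏ v ∈ τ.verts.filter p, μ (τ.numChildren v))
        * (∏ v ∈ τ.verts.filter (fun v => ¬ p v), μ (τ.numChildren v)) :=
    (Finset.prod_filter_mul_prod_filter_not τ.verts p _).symm
  have hleafprod : (∏ v ∈ τ.verts.filter p, μ (τ.numChildren v)) = (1 / (3 * zβ)) ^ L := by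
    rw [← hleaves]
    rw [Finset.prod_congr rfl (fun v hv => ?_), Finset.prod_const]
    simp only [PlaneTree.leaves, Finset.mem_filter, hp] at hv
    rw [hv.2.2, hμ0]
  have hzpos : 0 < zβ := by
    rw [hz]
    have : 0 < Real.sqrt 3 := Real.sqrt_pos.mpr (by norm_num)
    positivity
  have hnotleaf : ∀ v ∈ τ.verts.filter (fun v => ¬ p v), 1 ≤ τ.numChildren v := by
    intro v hv
    simp only [Finset.mem_filter, hp, not_and, ne_eq, not_not] at hv
    by_cases hveq : v = []
    · subst hveq; exact root_has_child τ (by omega)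
    · have := hv.2 hveq
      omega
  have hintprod : (∏ v ∈ τ.verts.filter (fun v => ¬ p v), μ (τ.numChildren v))
      = β ^ n * (1 / zβ) ^ (n + 1 - L) := by
    rw [Finset.prod_congr rfl (fun v hv => hμ _ (hnotleaf v hv))]
    rw [Finset.prod_div_distrib, Finset.prod_const, Finset.prod_pow_eq_pow_sum]
    have hsum2 : ∑ v ∈ τ.verts.filter (fun v => ¬ p v), τ.numChildren v = n := by
      rw [← hsum]
      apply Finset.sum_subset (Finset.filter_subset _ _)
      intro v hv hnf
      have hpv : p v := by
        by_contra hc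
        exact hnf (Finset.mem_filter.mpr ⟨hv, hc⟩)
      exact hpv.2
    have hcardf : (τ.verts.filter (fun v => ¬ p v)).card = n + 1 - L := by
      have := Finset.card_filter_add_card_filter_not (s := τ.verts) (p := p)
      rw [← hleaves] at this
      omega
    rw [hsum2, hcardf, div_pow, one_pow, div_eq_mul_inv, one_div, ← inv_pow]
  rw [hsplit, hleafprod, hintprod]
  have h3 : (1 / (3 * zβ) : ℝ) = (1/3) * (1/zβ) := by field_simp
  rw [h3, mul_pow, div_pow β 3 n]
  have e1 : (1/zβ : ℝ)^L * (1/zβ)^(n+1-L) = (1/zβ)^(n+1) := by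
    rw [← pow_add]; congr 1; omega
  have e2 : (1/3 : ℝ)^L * (1/3)^(n-L) = (1/3)^n := by
    rw [← pow_add]; congr 1; omega
  have h3n : (1/3:ℝ)^n = 1/3^n := by rw [div_pow, one_pow]
  calc (1/3:ℝ)^L * (1/zβ)^L * (β^n * (1/zβ)^(n+1-L)) * (1/3)^(n-L)
      = ((1/zβ)^L * (1/zβ)^(n+1-L)) * ((1/3)^L * (1/3)^(n-L)) * β^n := by ring
    _ = (1/zβ)^(n+1) * ((1/3)^n) * β^n := by rw [e1, e2]
    _ = (1/zβ)^(n+1) * (β^n/3^n) := by rw [h3n]; ring
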